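/- Let (π₁, π₂) be a chainable pair of patterns with πᵢ = (aᵢ, bᵢ, cᵢ, dᵢ). Then for each equivalence class P ∈ P(S_{π₁}, S_{π₂}): (1) R_P is the set of nonzero entries of the column S_{π₁}[:,i] and C_P is the set of nonzero entries of the row S_{π₂}[i,:], for every i ∈ P; (2) the sets R_P × C_P, for P ranging over P(S_{π₁}, S_{π₂}), are pairwise disjoint; (3) |P| = r(π₁, π₂), |R_P| = b₁ and |C_P| = c₂; (4) the set of nonzero entries of S_{π₁*π₂} equals the set of nonzero entries of S_{π₁}·S_{π₂}, which equals the union over P of R_P × C_P. -/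

import Mathlib

/-- A *pattern* is a tuple `(a, b, c, d)` of (positive) natural numbers. -/
structure Pattern where
  a : ℕ
  b : ℕ
  c : ℕ
  d : ℕ

namespace Pattern

/-- The entries of a pattern are positive integers. -/
def Pos (π : Pattern) : Prop := 0 < π.a ∧ 0 < π.b ∧ 0 < π.c ∧ 0 < π.d

/-- Number of rows `a*b*d` of a `π`-factor. -/
def rows (π : Pattern) : ℕ := π.a * π.b * π.d

/-- Number of columns `a*c*d` of a `π`-factor. -/
def cols (π : Pattern) : ℕ := π.a * π.c * π.d

/-- `r(π₁, π₂) = a₁c₁/a₂ (= b₂d₂/d₁)`. -/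
def rk (π₁ π₂ : Pattern) : ℕ := π₁.a * π₁.c / π₂.a

/-- A pair of patterns is *chainable* if `a₁c₁/a₂ = b₂d₂/d₁` is a positive integer,
`a₁ ∣ a₂` and `d₂ ∣ d₁`. -/
def Chainable (π₁ π₂ : Pattern) : Prop :=
  π₂.a ∣ π₁.a * π₁.c ∧ π₁.d ∣ π₂.b * π₂.d ∧
    π₁.a * π₁.c / π₂.a = π₂.b * π₂.d / π₁.d ∧
    0 < π₁.a * π₁.c / π₂.a ∧ π₁.a ∣ π₂.a ∧ π₂.d ∣ π₁.d

/-- `π₁ * π₂ := (a₁, b₁d₁/d₂, a₂c₂/a₁, d₂)`. -/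
instance : Mul Pattern :=
  ⟨fun π₁ π₂ => ⟨π₁.a, π₁.b * π₁.d / π₂.d, π₂.a * π₂.c / π₁.a, π₂.d⟩⟩

/-- `‖π‖₀ := a*b*c*d`. -/
def norm0 (π : Pattern) : ℕ := π.a * π.b * π.c * π.d

end Pattern

open scoped Kronecker

/-- The flattening equivalence `(Fin a × Fin b) × Fin d ≃ Fin (a*b*d)`. -/
def kron3Equiv (a b d : ℕ) : (Fin a × Fin b) × Fin d ≃ Fin (a * b * d) :=
  (finProdFinEquiv.prodCongr (Equiv.refl (Fin d))).trans finProdFinEquiv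

/-- The support matrix `S_π = I_a ⊗ 1_{b×c} ⊗ I_d ∈ {0,1}^{abd × acd}`. -/
def Pattern.S (π : Pattern) : Matrix (Fin π.rows) (Fin π.cols) ℕ :=
  Matrix.reindex (kron3Equiv π.a π.b π.d) (kron3Equiv π.a π.c π.d)
    ((1 : Matrix (Fin π.a) (Fin π.a) ℕ) ⊗ₖ
      (Matrix.of fun _ _ => (1 : ℕ) : Matrix (Fin π.b) (Fin π.c) ℕ) ⊗ₖ
      (1 : Matrix (Fin π.d) (Fin π.d) ℕ))

/-- Reindexing a matrix along equalities of dimensions. -/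
def castMat {α : Type*} {m n m' n' : ℕ} (hm : m = m') (hn : n = n')
    (A : Matrix (Fin m) (Fin n) α) : Matrix (Fin m') (Fin n') α :=
  Matrix.of fun i j => A (Fin.cast hm.symm i) (Fin.cast hn.symm j)

/-- The rank-one contribution support `U_k = L[:,k] ⬝ R[k,:]` of binary matrices `(L, R)`. -/
def contrib {m r n : ℕ} (L : Matrix (Fin m) (Fin r) ℕ) (R : Matrix (Fin r) (Fin n) ℕ)
    (k : Fin r) : Matrix (Fin m) (Fin n) ℕ :=
  Matrix.of fun i j => L i k * R k j

open scoped Classical in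
/-- The equivalence classes `P(L,R)` of the relation `k ∼ k' ↔ U_k = U_k'` on `Fin r`. -/
noncomputable def classes {m r n : ℕ} (L : Matrix (Fin m) (Fin r) ℕ)
    (R : Matrix (Fin r) (Fin n) ℕ) : Finset (Finset (Fin r)) :=
  Finset.image (fun k => Finset.univ.filter fun k' => contrib L R k' = contrib L R k)
    Finset.univ

open scoped Classical in
/-- `R_P`: the set of indices of nonzero rows of the common rank-one support of `P`. -/
noncomputable def rowSupp {m r n : ℕ} (L : Matrix (Fin m) (Fin r) ℕ)
    (R : Matrix (Fin r) (Fin n) ℕ) (P : Finset (Fin r)) : Finset (Fin m) :=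
  Finset.univ.filter fun i => ∃ k ∈ P, ∃ j, contrib L R k i j ≠ 0

open scoped Classical in
/-- `C_P`: the set of indices of nonzero columns of the common rank-one support of `P`. -/
noncomputable def colSupp {m r n : ℕ} (L : Matrix (Fin m) (Fin r) ℕ)
    (R : Matrix (Fin r) (Fin n) ℕ) (P : Finset (Fin r)) : Finset (Fin n) :=
  Finset.univ.filter fun j => ∃ k ∈ P, ∃ i, contrib L R k i j ≠ 0


/-! ### Auxiliary lemmas -/

lemma nat_hdiv {B : ℕ} (hB : 0 < B) (X : ℕ) {Z : ℕ} (hZ : Z < B) : (B*X + Z)/B = X := by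
  rw [Nat.mul_add_div hB, Nat.div_eq_of_lt hZ, add_zero]

lemma nat_hmod {D B : ℕ} (h : D ∣ B) (X Z : ℕ) : (B*X + Z) % D = Z % D := by
  obtain ⟨e, rfl⟩ := h
  rw [mul_assoc, Nat.mul_add_mod]

lemma card_filter_div_mod {N : ℕ} (M D r X Z : ℕ) (hr : 0 < r) (hD : 0 < D)
    (hM : M = r * D) (hZ : Z < D) (hbound : M * (X + 1) ≤ N) :
    (Finset.univ.filter (fun k : Fin N => (k:ℕ)/M = X ∧ (k:ℕ)%D = Z)).card = r := by
  have hMpos : 0 < M := hM ▸ Nat.mul_pos hr hD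
  have hDM : D ∣ M := hM ▸ dvd_mul_left D r
  have hsm : ∀ y : ℕ, y < r → D * y + Z < M := by
    intro y hy
    have h1 : D * y + Z < D * (y + 1) := by rw [Nat.mul_add, Nat.mul_one]; omega
    have h2 : D * (y + 1) ≤ D * r := Nat.mul_le_mul_left _ hy
    have h3 : D * r = M := by rw [hM, mul_comm]
    omega
  have key : ∀ y : ℕ, y < r → M * X + (D * y + Z) < N := by
    intro y hy
    have := hsm y hy
    calc M * X + (D * y + Z) < M * X + M := by omega
      _ = M * (X + 1) := by ring
      _ ≤ N := hbound
  rw [show r = (Finset.univ : Finset (Fin r)).card by simp]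
  refine Finset.card_bij' (fun k _ => (⟨((k:ℕ) % M)/D, by
      have : (k:ℕ) % M < r * D := hM ▸ Nat.mod_lt _ hMpos
      exact (Nat.div_lt_iff_lt_mul hD).2 (by omega)⟩ : Fin r))
    (fun y _ => (⟨M * X + (D * (y:ℕ) + Z), key y y.isLt⟩ : Fin N)) ?_ ?_ ?_ ?_
  · intro a _; exact Finset.mem_univ _
  · intro y _
    simp only [Finset.mem_filter, Finset.mem_univ, true_and]
    exact ⟨nat_hdiv hMpos X (hsm _ y.isLt),
      by rw [nat_hmod hDM, nat_hmod (dvd_refl D), Nat.mod_eq_of_lt hZ]⟩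
  · intro k hk
    simp only [Finset.mem_filter, Finset.mem_univ, true_and] at hk
    apply Fin.ext
    show M * X + (D * (((k:ℕ) % M)/D) + Z) = (k:ℕ)
    rw [← hk.1, ← hk.2, ← Nat.mod_mod_of_dvd (k:ℕ) hDM]
    calc M * ((k:ℕ)/M) + (D * (((k:ℕ) % M)/D) + (k:ℕ) % M % D)
        = M * ((k:ℕ)/M) + (k:ℕ) % M := by rw [Nat.div_add_mod]
      _ = (k:ℕ) := Nat.div_add_mod _ M
  · intro y _
    apply Fin.ext
    show ((M * X + (D * (y:ℕ) + Z)) % M) / D = (y:ℕ)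
    rw [nat_hmod (dvd_refl M), Nat.mod_eq_of_lt (hsm _ y.isLt), Nat.mul_add_div hD,
      Nat.div_eq_of_lt hZ, add_zero]

/-- The support relation of `S_π`: entry `(i,k)` is nonzero. -/
abbrev R1 (π : Pattern) (i k : ℕ) : Prop :=
  i / (π.b * π.d) = k / (π.c * π.d) ∧ i % π.d = k % π.d

/-- The "key" equivalence of two middle indices. -/
abbrev KEq (π₁ π₂ : Pattern) (k k' : ℕ) : Prop :=
  k / (π₁.c * π₁.d) = k' / (π₁.c * π₁.d) ∧ k % π₁.d = k' % π₁.d ∧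
  k / (π₂.b * π₂.d) = k' / (π₂.b * π₂.d) ∧ k % π₂.d = k' % π₂.d

lemma S_apply (π : Pattern) (i : Fin π.rows) (j : Fin π.cols) :
    π.S i j = if R1 π (i:ℕ) (j:ℕ) then 1 else 0 := by
  have h1 : π.S i j = (if (i:ℕ)/π.d/π.b = (j:ℕ)/π.d/π.c then (1:ℕ) else 0) *
      (if (i:ℕ) % π.d = (j:ℕ) % π.d then (1:ℕ) else 0) := by
    rw [Pattern.S, Matrix.reindex_apply]
    refine (Matrix.submatrix_apply _ _ _ _ _).trans ?_
    simp only [kron3Equiv]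
    erw [Equiv.symm_trans_apply, Equiv.symm_trans_apply]
    simp only [Pattern.S, Matrix.reindex_apply, Matrix.submatrix_apply, kron3Equiv,
      Equiv.symm_trans_apply, Equiv.prodCongr_symm, Equiv.prodCongr_apply, Equiv.refl_symm,
      Prod.map, Equiv.refl_apply, Matrix.kroneckerMap_apply, Matrix.one_apply, Matrix.of_apply,
      finProdFinEquiv, Equiv.coe_fn_symm_mk, Fin.ext_iff, Fin.coe_divNat, Fin.coe_modNat]
    erw [Fin.coe_divNat, Fin.coe_divNat, Fin.coe_modNat, Fin.coe_modNat]
    ring_nf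
  rw [h1, Nat.div_div_eq_div_mul, Nat.div_div_eq_div_mul, mul_comm π.d π.b, mul_comm π.d π.c]
  by_cases h : (i:ℕ) / (π.b * π.d) = (j:ℕ) / (π.c * π.d) <;>
    by_cases h' : (i:ℕ) % π.d = (j:ℕ) % π.d <;> simp [R1, h, h']

lemma S_ne_iff (π : Pattern) (i : Fin π.rows) (j : Fin π.cols) :
    π.S i j ≠ 0 ↔ R1 π (i:ℕ) (j:ℕ) := by
  rw [S_apply]; split_ifs with h
  · simpa using h
  · simpa using h

lemma R1_witness_row (π : Pattern) (h : π.Pos) {k : ℕ} (hk : k < π.cols) :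
    ∃ i : Fin π.rows, R1 π (i:ℕ) k := by
  obtain ⟨ha, hb, hc, hd⟩ := h
  have hbd : 0 < π.b * π.d := Nat.mul_pos hb hd
  have hcd : 0 < π.c * π.d := Nat.mul_pos hc hd
  have hX : k / (π.c * π.d) < π.a := by
    rw [Nat.div_lt_iff_lt_mul hcd]
    calc k < π.cols := hk
      _ = π.a * (π.c * π.d) := by show π.a * π.c * π.d = _; ring
  have hZ : k % π.d < π.b * π.d :=
    lt_of_lt_of_le (Nat.mod_lt _ hd) (Nat.le_mul_of_pos_left _ hb)
  refine ⟨⟨(π.b*π.d) * (k / (π.c*π.d)) + k % π.d, ?_⟩, ?_, ?_⟩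
  · calc (π.b*π.d) * (k / (π.c*π.d)) + k % π.d
        < (π.b*π.d) * (k / (π.c*π.d)) + (π.b*π.d) := by omega
      _ = (π.b*π.d) * (k / (π.c*π.d) + 1) := by ring
      _ ≤ (π.b*π.d) * π.a := Nat.mul_le_mul_left _ hX
      _ = π.rows := by show _ = π.a * π.b * π.d; ring
  · exact nat_hdiv hbd _ hZ
  · show ((π.b*π.d) * (k / (π.c*π.d)) + k % π.d) % π.d = k % π.d
    rw [nat_hmod (dvd_mul_left π.d π.b), Nat.mod_mod_of_dvd _ (dvd_refl π.d)]

lemma R1_witness_col (π : Pattern) (h : π.Pos) {k : ℕ} (hk : k < π.rows) :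
    ∃ j : Fin π.cols, R1 π k (j:ℕ) := by
  obtain ⟨ha, hb, hc, hd⟩ := h
  have hbd : 0 < π.b * π.d := Nat.mul_pos hb hd
  have hcd : 0 < π.c * π.d := Nat.mul_pos hc hd
  have hX : k / (π.b * π.d) < π.a := by
    rw [Nat.div_lt_iff_lt_mul hbd]
    calc k < π.rows := hk
      _ = π.a * (π.b * π.d) := by show π.a * π.b * π.d = _; ring
  have hZ : k % π.d < π.c * π.d :=
    lt_of_lt_of_le (Nat.mod_lt _ hd) (Nat.le_mul_of_pos_left _ hc)
  refine ⟨⟨(π.c*π.d) * (k / (π.b*π.d)) + k % π.d, ?_⟩, ?_, ?_⟩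
  · calc (π.c*π.d) * (k / (π.b*π.d)) + k % π.d
        < (π.c*π.d) * (k / (π.b*π.d)) + (π.c*π.d) := by omega
      _ = (π.c*π.d) * (k / (π.b*π.d) + 1) := by ring
      _ ≤ (π.c*π.d) * π.a := Nat.mul_le_mul_left _ hX
      _ = π.cols := by show _ = π.a * π.c * π.d; ring
  · exact (nat_hdiv hcd _ hZ).symm
  · show k % π.d = ((π.c*π.d) * (k / (π.b*π.d)) + k % π.d) % π.d
    rw [nat_hmod (dvd_mul_left π.d π.c), Nat.mod_mod_of_dvd _ (dvd_refl π.d)]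

open scoped Classical in
/-- **Lemma.** Properties of the equivalence classes of `(S_{π₁}, S_{π₂})`
for a chainable pair `(π₁, π₂)`. -/
theorem classes_of_chainable_pair (π₁ π₂ : Pattern)
    (h₁ : π₁.Pos) (h₂ : π₂.Pos) (hch : Pattern.Chainable π₁ π₂)
    (hdim : π₁.cols = π₂.rows)
    (hr : (π₁ * π₂).rows = π₁.rows) (hc : (π₁ * π₂).cols = π₂.cols) :
    -- (1) `R_P` and `C_P` are the supports of the `i`-th column of `S_{π₁}` and the
    -- `i`-th row of `S_{π₂}`, for every `i ∈ P`
    (∀ P ∈ classes π₁.S (castMat hdim.symm rfl π₂.S), ∀ k ∈ P,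
      rowSupp π₁.S (castMat hdim.symm rfl π₂.S) P =
        Finset.univ.filter (fun i => π₁.S i k ≠ 0) ∧
      colSupp π₁.S (castMat hdim.symm rfl π₂.S) P =
        Finset.univ.filter (fun j => castMat hdim.symm rfl π₂.S k j ≠ 0)) ∧
    -- (2) the blocks `R_P × C_P` are pairwise disjoint
    (∀ P ∈ classes π₁.S (castMat hdim.symm rfl π₂.S),
      ∀ Q ∈ classes π₁.S (castMat hdim.symm rfl π₂.S), P ≠ Q →
      Disjoint
        (rowSupp π₁.S (castMat hdim.symm rfl π₂.S) P ×ˢ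
          colSupp π₁.S (castMat hdim.symm rfl π₂.S) P)
        (rowSupp π₁.S (castMat hdim.symm rfl π₂.S) Q ×ˢ
          colSupp π₁.S (castMat hdim.symm rfl π₂.S) Q)) ∧
    -- (3) `|P| = r(π₁,π₂)`, `|R_P| = b₁`, `|C_P| = c₂`
    (∀ P ∈ classes π₁.S (castMat hdim.symm rfl π₂.S),
      P.card = Pattern.rk π₁ π₂ ∧
      (rowSupp π₁.S (castMat hdim.symm rfl π₂.S) P).card = π₁.b ∧
      (colSupp π₁.S (castMat hdim.symm rfl π₂.S) P).card = π₂.c) ∧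
    -- (4) `supp(S_{π₁*π₂}) = supp(S_{π₁}·S_{π₂}) = ⋃_P R_P × C_P`
    (∀ i j,
      (castMat hr hc (π₁ * π₂).S i j ≠ 0 ↔ (π₁.S * castMat hdim.symm rfl π₂.S) i j ≠ 0) ∧
      ((π₁.S * castMat hdim.symm rfl π₂.S) i j ≠ 0 ↔
        ∃ P ∈ classes π₁.S (castMat hdim.symm rfl π₂.S),
          i ∈ rowSupp π₁.S (castMat hdim.symm rfl π₂.S) P ∧
          j ∈ colSupp π₁.S (castMat hdim.symm rfl π₂.S) P)) := by
  
  classical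
  obtain ⟨ha₁, hb₁, hc₁p, hd₁p⟩ := h₁
  obtain ⟨ha₂, hb₂, hc₂p, hd₂p⟩ := h₂
  obtain ⟨hdvd1, hdvd2, hreq, hrpos, hadvd, hddvd⟩ := hch
  set SR := castMat hdim.symm rfl π₂.S with hSRdef
  obtain ⟨t, hat⟩ := hadvd
  have ht : 0 < t := by
    rcases Nat.eq_zero_or_pos t with h | h
    · rw [h, mul_zero] at hat; omega
    · exact h
  have hrp : 0 < Pattern.rk π₁ π₂ := hrpos
  have hrk' : Pattern.rk π₁ π₂ = π₂.b * π₂.d / π₁.d := hreq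
  have hbd2 : π₂.b * π₂.d = Pattern.rk π₁ π₂ * π₁.d := by
    rw [hrk']; exact (Nat.div_mul_cancel hdvd2).symm
  have hc1 : π₁.c = t * Pattern.rk π₁ π₂ := by
    have h2 : π₁.a * π₁.c = π₂.a * Pattern.rk π₁ π₂ := (Nat.mul_div_cancel' hdvd1).symm
    rw [hat, mul_assoc] at h2
    exact Nat.eq_of_mul_eq_mul_left ha₁ h2
  have hc1d1 : π₁.c * π₁.d = (π₂.b * π₂.d) * t := by rw [hc1, hbd2]; ring
  have hN : (π₁.cols : ℕ) = π₂.a * (π₂.b * π₂.d) := by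
    rw [hdim]; show π₂.a * π₂.b * π₂.d = _; ring
  have hbd2pos : 0 < π₂.b * π₂.d := Nat.mul_pos hb₂ hd₂p
  have hbd1pos : 0 < π₁.b * π₁.d := Nat.mul_pos hb₁ hd₁p
  have hcd1pos : 0 < π₁.c * π₁.d := Nat.mul_pos hc₁p hd₁p
  have hcd2pos : 0 < π₂.c * π₂.d := Nat.mul_pos hc₂p hd₂p
  -- entry values
  have hSRval : ∀ (k : Fin π₁.cols) (j : Fin π₂.cols),
      SR k j = if R1 π₂ (k:ℕ) (j:ℕ) then 1 else 0 := by
    intro k j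
    show π₂.S (Fin.cast hdim.symm.symm k) (Fin.cast rfl j) = _
    rw [S_apply]
    simp only [Fin.coe_cast]
  have hSRne : ∀ (k : Fin π₁.cols) (j : Fin π₂.cols),
      SR k j ≠ 0 ↔ R1 π₂ (k:ℕ) (j:ℕ) := by
    intro k j
    rw [hSRval]; split_ifs with h
    · simpa using h
    · simpa using h
  have hCne : ∀ (k : Fin π₁.cols) (i : Fin π₁.rows) (j : Fin π₂.cols),
      contrib π₁.S SR k i j ≠ 0 ↔ (R1 π₁ (i:ℕ) (k:ℕ) ∧ R1 π₂ (k:ℕ) (j:ℕ)) := by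
    intro k i j
    show π₁.S i k * SR k j ≠ 0 ↔ _
    rw [Nat.mul_ne_zero_iff, S_ne_iff, hSRne]
  have hwit : ∀ k : Fin π₁.cols, ∃ i : Fin π₁.rows, ∃ j : Fin π₂.cols,
      R1 π₁ (i:ℕ) (k:ℕ) ∧ R1 π₂ (k:ℕ) (j:ℕ) := by
    intro k
    obtain ⟨i, hi⟩ := R1_witness_row π₁ ⟨ha₁, hb₁, hc₁p, hd₁p⟩ k.isLt
    obtain ⟨j, hj⟩ := R1_witness_col π₂ ⟨ha₂, hb₂, hc₂p, hd₂p⟩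
      (show (k:ℕ) < π₂.rows from hdim ▸ k.isLt)
    exact ⟨i, j, hi, hj⟩
  have hkc : ∀ k k' : Fin π₁.cols,
      contrib π₁.S SR k = contrib π₁.S SR k' ↔ KEq π₁ π₂ (k:ℕ) (k':ℕ) := by
    intro k k'
    constructor
    · intro hU
      obtain ⟨i, j, hik, hkj⟩ := hwit k
      have h1 : contrib π₁.S SR k' i j ≠ 0 := by
        rw [← hU, hCne]; exact ⟨hik, hkj⟩
      rw [hCne] at h1
      obtain ⟨⟨p1, p2⟩, ⟨p3, p4⟩⟩ := h1
      obtain ⟨q1, q2⟩ := hik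
      obtain ⟨q3, q4⟩ := hkj
      exact ⟨q1.symm.trans p1, q2.symm.trans p2, q3.trans p3.symm, q4.trans p4.symm⟩
    · rintro ⟨e1, e2, e3, e4⟩
      ext i j
      show π₁.S i k * SR k j = π₁.S i k' * SR k' j
      rw [S_apply, S_apply, hSRval, hSRval]
      simp only [R1, e1, e2, e3, e4]
  have hclassRep : ∀ P ∈ classes π₁.S SR, ∃ k₀, k₀ ∈ P ∧
      ∀ k, (k ∈ P ↔ KEq π₁ π₂ (k:ℕ) (k₀:ℕ)) := by
    intro P hP
    unfold classes at hP
    rw [Finset.mem_image] at hP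
    obtain ⟨k₀, -, hk₀⟩ := hP
    refine ⟨k₀, ?_, ?_⟩
    · rw [← hk₀]; simp [Finset.mem_filter]
    · intro k; rw [← hk₀, Finset.mem_filter]; simp [hkc k k₀]
  have hmkClass : ∀ k₀ : Fin π₁.cols, ∃ P ∈ classes π₁.S SR,
      ∀ k, (k ∈ P ↔ KEq π₁ π₂ (k:ℕ) (k₀:ℕ)) := by
    intro k₀
    exact ⟨_, Finset.mem_image_of_mem _ (Finset.mem_univ k₀),
      fun k => by rw [Finset.mem_filter]; simp [hkc k k₀]⟩
  have hrowChar : ∀ P ∈ classes π₁.S SR, ∀ k ∈ P, ∀ i : Fin π₁.rows,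
      (i ∈ rowSupp π₁.S SR P ↔ R1 π₁ (i:ℕ) (k:ℕ)) := by
    intro P hP k hk i
    obtain ⟨k₀, hk₀P, hmem⟩ := hclassRep P hP
    have hkk₀ := (hmem k).1 hk
    constructor
    · intro hi
      unfold rowSupp at hi
      rw [Finset.mem_filter] at hi
      obtain ⟨-, k', hk'P, j, hne⟩ := hi
      rw [hCne] at hne
      obtain ⟨⟨p1, p2⟩, -⟩ := hne
      have hk'k₀ := (hmem k').1 hk'P
      exact ⟨p1.trans (hk'k₀.1.trans hkk₀.1.symm), p2.trans (hk'k₀.2.1.trans hkk₀.2.1.symm)⟩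
    · intro hR
      obtain ⟨i', j, -, hkj⟩ := hwit k
      unfold rowSupp
      rw [Finset.mem_filter]
      exact ⟨Finset.mem_univ _, k, hk, j, (hCne k i j).2 ⟨hR, hkj⟩⟩
  have hcolChar : ∀ P ∈ classes π₁.S SR, ∀ k ∈ P, ∀ j : Fin π₂.cols,
      (j ∈ colSupp π₁.S SR P ↔ R1 π₂ (k:ℕ) (j:ℕ)) := by
    intro P hP k hk j
    obtain ⟨k₀, hk₀P, hmem⟩ := hclassRep P hP
    have hkk₀ := (hmem k).1 hk
    constructor
    · intro hj
      unfold colSupp at hj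
      rw [Finset.mem_filter] at hj
      obtain ⟨-, k', hk'P, i, hne⟩ := hj
      rw [hCne] at hne
      obtain ⟨-, ⟨p3, p4⟩⟩ := hne
      have hk'k₀ := (hmem k').1 hk'P
      exact ⟨(hkk₀.2.2.1.trans hk'k₀.2.2.1.symm).trans p3,
        (hkk₀.2.2.2.trans hk'k₀.2.2.2.symm).trans p4⟩
    · intro hR
      obtain ⟨i, j', hik, -⟩ := hwit k
      unfold colSupp
      rw [Finset.mem_filter]
      exact ⟨Finset.mem_univ _, k, hk, i, (hCne k i j).2 ⟨hik, hR⟩⟩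
  have hsum : ∀ (i : Fin π₁.rows) (j : Fin π₂.cols),
      (π₁.S * SR) i j ≠ 0 ↔ ∃ k : Fin π₁.cols, R1 π₁ (i:ℕ) (k:ℕ) ∧ R1 π₂ (k:ℕ) (j:ℕ) := by
    intro i j
    rw [Matrix.mul_apply]
    have hzero : (∑ k, π₁.S i k * SR k j) = 0 ↔ ∀ k, π₁.S i k * SR k j = 0 := by
      rw [Finset.sum_eq_zero_iff]; simp
    constructor
    · intro h
      by_contra hno
      push_neg at hno
      apply h
      rw [hzero]
      intro k
      by_contra hk0
      exact hno k ((hCne k i j).1 hk0).1 ((hCne k i j).1 hk0).2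
    · rintro ⟨k, h1, h2⟩ h0
      rw [hzero] at h0
      exact (hCne k i j).2 ⟨h1, h2⟩ (h0 k)
  refine ⟨?_, ?_, ?_, ?_⟩
  · -- part 1
    intro P hP k hk
    constructor
    · ext i
      simp only [hrowChar P hP k hk i, Finset.mem_filter, Finset.mem_univ, true_and,
        S_ne_iff]
    · ext j
      simp only [hcolChar P hP k hk j, Finset.mem_filter, Finset.mem_univ, true_and,
        hSRne]
  · -- part 2
    intro P hP Q hQ hne
    obtain ⟨k₀, hk₀P, hmemP⟩ := hclassRep P hP
    obtain ⟨k₁, hk₁Q, hmemQ⟩ := hclassRep Q hQ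
    rw [Finset.disjoint_left]
    rintro ⟨i, j⟩ hij hij'
    rw [Finset.mem_product] at hij hij'
    have hi0 := (hrowChar P hP k₀ hk₀P i).1 hij.1
    have hj0 := (hcolChar P hP k₀ hk₀P j).1 hij.2
    have hi1 := (hrowChar Q hQ k₁ hk₁Q i).1 hij'.1
    have hj1 := (hcolChar Q hQ k₁ hk₁Q j).1 hij'.2
    apply hne
    have hKE : KEq π₁ π₂ (k₀:ℕ) (k₁:ℕ) :=
      ⟨hi0.1.symm.trans hi1.1, hi0.2.symm.trans hi1.2,
        hj0.1.trans hj1.1.symm, hj0.2.trans hj1.2.symm⟩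
    ext k
    rw [hmemP k, hmemQ k]
    constructor
    · rintro ⟨e1, e2, e3, e4⟩
      exact ⟨e1.trans hKE.1, e2.trans hKE.2.1, e3.trans hKE.2.2.1, e4.trans hKE.2.2.2⟩
    · rintro ⟨e1, e2, e3, e4⟩
      exact ⟨e1.trans hKE.1.symm, e2.trans hKE.2.1.symm, e3.trans hKE.2.2.1.symm,
        e4.trans hKE.2.2.2.symm⟩
  · -- part 3
    intro P hP
    obtain ⟨k₀, hk₀P, hmem⟩ := hclassRep P hP
    have hX2 : (k₀:ℕ)/(π₂.b*π₂.d) < π₂.a := by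
      rw [Nat.div_lt_iff_lt_mul hbd2pos, ← hN]; exact k₀.isLt
    have hX1 : (k₀:ℕ)/(π₁.c*π₁.d) < π₁.a := by
      rw [Nat.div_lt_iff_lt_mul hcd1pos]
      calc (k₀:ℕ) < π₁.cols := k₀.isLt
        _ = π₁.a * (π₁.c * π₁.d) := by show π₁.a * π₁.c * π₁.d = _; ring
    refine ⟨?_, ?_, ?_⟩
    · have hPeq : P = Finset.univ.filter (fun k : Fin π₁.cols =>
          (k:ℕ)/(π₂.b*π₂.d) = (k₀:ℕ)/(π₂.b*π₂.d) ∧ (k:ℕ)%π₁.d = (k₀:ℕ)%π₁.d) := by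
        ext k
        rw [hmem k, Finset.mem_filter]
        simp only [Finset.mem_univ, true_and]
        constructor
        · rintro ⟨e1, e2, e3, e4⟩; exact ⟨e3, e2⟩
        · rintro ⟨e3, e2⟩
          refine ⟨?_, e2, e3, ?_⟩
          · calc (k:ℕ)/(π₁.c*π₁.d) = (k:ℕ)/(π₂.b*π₂.d)/t := by
                  rw [hc1d1, Nat.div_div_eq_div_mul]
              _ = (k₀:ℕ)/(π₂.b*π₂.d)/t := by rw [e3]
              _ = (k₀:ℕ)/(π₁.c*π₁.d) := by rw [hc1d1, Nat.div_div_eq_div_mul]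
          · rw [← Nat.mod_mod_of_dvd (k:ℕ) hddvd, ← Nat.mod_mod_of_dvd (k₀:ℕ) hddvd, e2]
      rw [hPeq]
      refine card_filter_div_mod (π₂.b*π₂.d) π₁.d (Pattern.rk π₁ π₂) _ _ hrp hd₁p hbd2
        (Nat.mod_lt _ hd₁p) ?_
      calc (π₂.b*π₂.d) * ((k₀:ℕ)/(π₂.b*π₂.d) + 1) ≤ (π₂.b*π₂.d) * π₂.a :=
          Nat.mul_le_mul_left _ hX2
        _ = π₂.a * (π₂.b * π₂.d) := mul_comm _ _
        _ = π₁.cols := hN.symm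
    · have hReq : rowSupp π₁.S SR P = Finset.univ.filter (fun i : Fin π₁.rows =>
          (i:ℕ)/(π₁.b*π₁.d) = (k₀:ℕ)/(π₁.c*π₁.d) ∧ (i:ℕ)%π₁.d = (k₀:ℕ)%π₁.d) := by
        ext i
        rw [hrowChar P hP k₀ hk₀P i, Finset.mem_filter]
        simp only [Finset.mem_univ, true_and]
      rw [hReq]
      refine card_filter_div_mod (π₁.b*π₁.d) π₁.d π₁.b _ _ hb₁ hd₁p rfl
        (Nat.mod_lt _ hd₁p) ?_
      calc (π₁.b*π₁.d) * ((k₀:ℕ)/(π₁.c*π₁.d) + 1) ≤ (π₁.b*π₁.d) * π₁.a :=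
          Nat.mul_le_mul_left _ hX1
        _ = π₁.rows := by show _ = π₁.a * π₁.b * π₁.d; ring
    · have hCeq : colSupp π₁.S SR P = Finset.univ.filter (fun j : Fin π₂.cols =>
          (j:ℕ)/(π₂.c*π₂.d) = (k₀:ℕ)/(π₂.b*π₂.d) ∧ (j:ℕ)%π₂.d = (k₀:ℕ)%π₂.d) := by
        ext j
        rw [hcolChar P hP k₀ hk₀P j, Finset.mem_filter]
        simp only [Finset.mem_univ, true_and]
        constructor
        · rintro ⟨u, v⟩; exact ⟨u.symm, v.symm⟩
        · rintro ⟨u, v⟩; exact ⟨u.symm, v.symm⟩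
      rw [hCeq]
      refine card_filter_div_mod (π₂.c*π₂.d) π₂.d π₂.c _ _ hc₂p hd₂p rfl
        (Nat.mod_lt _ hd₂p) ?_
      calc (π₂.c*π₂.d) * ((k₀:ℕ)/(π₂.b*π₂.d) + 1) ≤ (π₂.c*π₂.d) * π₂.a :=
          Nat.mul_le_mul_left _ hX2
        _ = π₂.cols := by show _ = π₂.a * π₂.c * π₂.d; ring
  · -- part 4
    intro i j
    constructor
    · -- supp of S_{π₁*π₂} = supp of product
      have hmulS : (castMat hr hc (π₁*π₂).S i j ≠ 0) ↔ R1 (π₁*π₂) (i:ℕ) (j:ℕ) := by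
        show ((π₁*π₂).S (Fin.cast hr.symm i) (Fin.cast hc.symm j) ≠ 0) ↔ _
        rw [S_ne_iff]
        simp only [Fin.coe_cast]
      have hmb : (π₁*π₂).b * (π₁*π₂).d = π₁.b * π₁.d := by
        show (π₁.b*π₁.d/π₂.d) * π₂.d = _
        exact Nat.div_mul_cancel (Dvd.dvd.mul_left hddvd π₁.b)
      have hmc : (π₁*π₂).c * (π₁*π₂).d = (π₂.c*π₂.d)*t := by
        show (π₂.a*π₂.c/π₁.a) * π₂.d = _
        rw [hat, show π₁.a*t*π₂.c = π₁.a*(t*π₂.c) by ring, Nat.mul_div_cancel_left _ ha₁]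
        ring
      have hmd : (π₁*π₂).d = π₂.d := rfl
      rw [hmulS, hsum i j]
      show ((i:ℕ)/((π₁*π₂).b*(π₁*π₂).d) = (j:ℕ)/((π₁*π₂).c*(π₁*π₂).d) ∧
        (i:ℕ)%(π₁*π₂).d = (j:ℕ)%(π₁*π₂).d) ↔ _
      rw [hmb, hmc, hmd]
      constructor
      · rintro ⟨hdiv, hmod⟩
        have hjX : (j:ℕ)/(π₂.c*π₂.d) < π₂.a := by
          rw [Nat.div_lt_iff_lt_mul hcd2pos]
          calc (j:ℕ) < π₂.cols := j.isLt
            _ = π₂.a * (π₂.c*π₂.d) := by show π₂.a * π₂.c * π₂.d = _; ring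
        have hiZ : (i:ℕ)%π₁.d < π₂.b*π₂.d :=
          lt_of_lt_of_le (Nat.mod_lt _ hd₁p) (Nat.le_of_dvd hbd2pos hdvd2)
        have hklt : (π₂.b*π₂.d)*((j:ℕ)/(π₂.c*π₂.d)) + (i:ℕ)%π₁.d < π₁.cols := by
          calc (π₂.b*π₂.d)*((j:ℕ)/(π₂.c*π₂.d)) + (i:ℕ)%π₁.d
              < (π₂.b*π₂.d)*((j:ℕ)/(π₂.c*π₂.d)) + (π₂.b*π₂.d) := by omega
            _ = (π₂.b*π₂.d)*((j:ℕ)/(π₂.c*π₂.d) + 1) := by ring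
            _ ≤ (π₂.b*π₂.d)*π₂.a := Nat.mul_le_mul_left _ hjX
            _ = π₂.a*(π₂.b*π₂.d) := mul_comm _ _
            _ = π₁.cols := hN.symm
        refine ⟨⟨(π₂.b*π₂.d)*((j:ℕ)/(π₂.c*π₂.d)) + (i:ℕ)%π₁.d, hklt⟩, ⟨?_, ?_⟩, ⟨?_, ?_⟩⟩
        · show (i:ℕ)/(π₁.b*π₁.d) =
            ((π₂.b*π₂.d)*((j:ℕ)/(π₂.c*π₂.d)) + (i:ℕ)%π₁.d)/(π₁.c*π₁.d)
          calc (i:ℕ)/(π₁.b*π₁.d)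
              = (j:ℕ)/(π₂.c*π₂.d)/t := by rw [hdiv, Nat.div_div_eq_div_mul]
            _ = ((π₂.b*π₂.d)*((j:ℕ)/(π₂.c*π₂.d)) + (i:ℕ)%π₁.d)/(π₂.b*π₂.d)/t := by
                  rw [nat_hdiv hbd2pos _ hiZ]
            _ = ((π₂.b*π₂.d)*((j:ℕ)/(π₂.c*π₂.d)) + (i:ℕ)%π₁.d)/(π₁.c*π₁.d) := by
                  rw [hc1d1, Nat.div_div_eq_div_mul]
        · show (i:ℕ)%π₁.d =
            ((π₂.b*π₂.d)*((j:ℕ)/(π₂.c*π₂.d)) + (i:ℕ)%π₁.d)%π₁.d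
          rw [nat_hmod hdvd2, Nat.mod_mod_of_dvd _ (dvd_refl π₁.d)]
        · show ((π₂.b*π₂.d)*((j:ℕ)/(π₂.c*π₂.d)) + (i:ℕ)%π₁.d)/(π₂.b*π₂.d) =
            (j:ℕ)/(π₂.c*π₂.d)
          exact nat_hdiv hbd2pos _ hiZ
        · show ((π₂.b*π₂.d)*((j:ℕ)/(π₂.c*π₂.d)) + (i:ℕ)%π₁.d)%π₂.d = (j:ℕ)%π₂.d
          rw [nat_hmod (dvd_mul_left π₂.d π₂.b), Nat.mod_mod_of_dvd _ hddvd, hmod]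
      · rintro ⟨k, ⟨u1, u2⟩, ⟨v1, v2⟩⟩
        constructor
        · rw [u1, hc1d1, ← Nat.div_div_eq_div_mul, v1, Nat.div_div_eq_div_mul]
        · rw [← Nat.mod_mod_of_dvd (i:ℕ) hddvd, u2, Nat.mod_mod_of_dvd _ hddvd, v2]
    · constructor
      · intro h
        obtain ⟨k, h1, h2⟩ := (hsum i j).1 h
        obtain ⟨P, hP, hmem⟩ := hmkClass k
        have hkP : k ∈ P := (hmem k).2 ⟨rfl, rfl, rfl, rfl⟩
        exact ⟨P, hP, (hrowChar P hP k hkP i).2 h1, (hcolChar P hP k hkP j).2 h2⟩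
      · rintro ⟨P, hP, hiP, hjP⟩
        obtain ⟨k₀, hk₀P, -⟩ := hclassRep P hP
        exact (hsum i j).2 ⟨k₀, (hrowChar P hP k₀ hk₀P i).1 hiP,
          (hcolChar P hP k₀ hk₀P j).1 hjP⟩
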